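/- Let A, B, C be symmetric sequences of length n with entries in {±1}. If PSD_A(s) + PSD_B(s) + PSD_C(s) > 4n for some integer s, then there does not exist a sequence D such that A, B, C, D form a Williamson sequence. -/

import Mathlib

/-- The periodic autocorrelation function of the length-`n` sequence `a`. -/
def paf (n : ℕ) (a : ℕ → ℤ) (s : ℕ) : ℤ :=
  ∑ k ∈ Finset.range n, a k * a ((k + s) % n)

/-- `a` is a symmetric sequence of length `n`: `aᵢ = a_{n-i}` for `1 ≤ i < n`. -/
def SymmSeq (n : ℕ) (a : ℕ → ℤ) : Prop := ∀ i, 1 ≤ i → i < n → a i = a (n - i)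

/-- All entries of the length-`n` sequence `a` are `±1`. -/
def PMOne (n : ℕ) (a : ℕ → ℤ) : Prop := ∀ i < n, a i = 1 ∨ a i = -1

/-- `a,b,c,d` are Williamson sequences of order `n`. -/
def IsWilliamson (n : ℕ) (a b c d : ℕ → ℤ) : Prop :=
  SymmSeq n a ∧ SymmSeq n b ∧ SymmSeq n c ∧ SymmSeq n d ∧
  PMOne n a ∧ PMOne n b ∧ PMOne n c ∧ PMOne n d ∧
  ∀ s, 1 ≤ s → s ≤ n / 2 → paf n a s + paf n b s + paf n c s + paf n d s = 0

/-- The discrete Fourier transform of the length-`n` sequence `a`. -/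
noncomputable def dft (n : ℕ) (a : ℕ → ℤ) (s : ℤ) : ℂ :=
  ∑ k ∈ Finset.range n, (a k : ℂ) * Complex.exp (2 * Real.pi * Complex.I * k * s / n)

/-- The power spectral density of the length-`n` sequence `a`. -/
noncomputable def psd (n : ℕ) (a : ℕ → ℤ) (s : ℤ) : ℝ :=
  ‖dft n a s‖ ^ 2

noncomputable def eF (n : ℕ) (s : ℤ) (m : ℤ) : ℂ :=
  Complex.exp (2 * Real.pi * Complex.I * m * s / n)

lemma eF_congr (n : ℕ) (hn : 0 < n) (s m m' : ℤ) (h : (n : ℤ) ∣ (m - m')) :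
    eF n s m = eF n s m' := by
  obtain ⟨j, hj⟩ := h
  have hm : (m : ℂ) = m' + n * j := by
    have : m = m' + n * j := by omega
    exact_mod_cast congrArg (Int.cast : ℤ → ℂ) this
  have hnc : (n : ℂ) ≠ 0 := Nat.cast_ne_zero.2 hn.ne'
  unfold eF
  rw [hm]
  have harg : 2 * Real.pi * Complex.I * ((m' : ℂ) + n * j) * s / n
      = 2 * Real.pi * Complex.I * m' * s / n + (j * s) * (2 * Real.pi * Complex.I) := by
    field_simp
  rw [harg, Complex.exp_add]
  have : Complex.exp ((((j * s : ℤ) : ℂ)) * (2 * Real.pi * Complex.I)) = 1 :=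
    Complex.exp_int_mul_two_pi_mul_I (j * s)
  push_cast at this
  rw [this, mul_one]

lemma eF_zero (n : ℕ) (s : ℤ) : eF n s 0 = 1 := by
  simp [eF]

lemma eF_add (n : ℕ) (s m m' : ℤ) : eF n s (m + m') = eF n s m * eF n s m' := by
  unfold eF
  rw [← Complex.exp_add]
  congr 1
  push_cast
  ring

lemma conj_eF (n : ℕ) (s m : ℤ) : (starRingEnd ℂ) (eF n s m) = eF n s (-m) := by
  unfold eF
  rw [← Complex.exp_conj]
  congr 1
  simp [map_div₀, Complex.conj_I, map_ofNat]

lemma sum_range_shift {M : Type*} [AddCommMonoid M] (n l : ℕ) (hn : 0 < n) (hl : l ≤ n)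
    (g : ℕ → ℕ → M) :
    ∑ t ∈ Finset.range n, g ((l + t) % n) t
      = ∑ k ∈ Finset.range n, g k ((k + (n - l)) % n) := by
  apply Finset.sum_nbij' (i := fun t => (l + t) % n) (j := fun k => (k + (n - l)) % n)
  · intro t ht
    exact Finset.mem_range.2 (Nat.mod_lt _ hn)
  · intro k hk
    exact Finset.mem_range.2 (Nat.mod_lt _ hn)
  · intro t ht
    rw [Finset.mem_range] at ht
    rw [Nat.mod_add_mod, show l + t + (n - l) = t + n by omega,
      Nat.add_mod_right, Nat.mod_eq_of_lt ht]
  · intro k hk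
    rw [Finset.mem_range] at hk
    rw [Nat.add_mod_mod, show l + (k + (n - l)) = k + n by omega,
      Nat.add_mod_right, Nat.mod_eq_of_lt hk]
  · intro t ht
    rw [Finset.mem_range] at ht
    congr 1
    rw [Nat.mod_add_mod, show l + t + (n - l) = t + n by omega,
      Nat.add_mod_right, Nat.mod_eq_of_lt ht]

lemma paf_zero (n : ℕ) (a : ℕ → ℤ) (hp : PMOne n a) : paf n a 0 = n := by
  unfold paf
  rw [Finset.sum_congr rfl (fun k hk => ?_), Finset.sum_const, Finset.card_range,
    nsmul_eq_mul, mul_one]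
  rw [Finset.mem_range] at hk
  rw [Nat.add_zero, Nat.mod_eq_of_lt hk]
  rcases hp k hk with h | h <;> rw [h] <;> norm_num

lemma paf_even (n : ℕ) (hn : 0 < n) (a : ℕ → ℤ) (t : ℕ) (ht : t ≤ n) :
    paf n a t = paf n a (n - t) := by
  unfold paf
  have := sum_range_shift n t hn ht (fun x y => a y * a x)
  rw [Finset.sum_congr rfl (fun k _ => by rw [Nat.add_comm k t]), this]
  exact Finset.sum_congr rfl fun k _ => mul_comm _ _

lemma dft_eq (n : ℕ) (a : ℕ → ℤ) (s : ℤ) :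
    dft n a s = ∑ k ∈ Finset.range n, (a k : ℂ) * eF n s k := by
  unfold dft eF
  refine Finset.sum_congr rfl fun k _ => ?_
  norm_num

lemma psd_eq_sum (n : ℕ) (hn : 0 < n) (a : ℕ → ℤ) (s : ℤ) :
    (psd n a s : ℂ) = ∑ t ∈ Finset.range n, (paf n a t : ℂ) * eF n s t := by
  have key : ∑ t ∈ Finset.range n, (paf n a t : ℂ) * eF n s t
      = dft n a s * (starRingEnd ℂ) (dft n a s) := by
    unfold paf
    calc ∑ t ∈ Finset.range n, ((∑ k ∈ Finset.range n, a k * a ((k + t) % n) : ℤ) : ℂ) * eF n s t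
        = ∑ k ∈ Finset.range n, ∑ t ∈ Finset.range n,
            (a k : ℂ) * (a ((k + t) % n) : ℂ) * eF n s t := by
          rw [Finset.sum_comm]
          refine Finset.sum_congr rfl fun t _ => ?_
          push_cast
          rw [Finset.sum_mul]
      _ = ∑ k ∈ Finset.range n, ∑ m ∈ Finset.range n,
            (a k : ℂ) * (a m : ℂ) * (eF n s m * eF n s (-(k : ℤ))) := by
          refine Finset.sum_congr rfl fun k hk => ?_
          rw [Finset.mem_range] at hk
          have hshift := sum_range_shift n k hn hk.le
            (fun x y => (a k : ℂ) * (a x : ℂ) * eF n s y)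
          rw [hshift]
          refine Finset.sum_congr rfl fun m hm => ?_
          congr 1
          have : eF n s (((m + (n - k)) % n : ℕ) : ℤ) = eF n s ((m : ℤ) - k) := by
            apply eF_congr n hn
            have hcast : (((m + (n - k)) % n : ℕ) : ℤ) = ((m : ℤ) + n - k) % n := by
              push_cast [Nat.cast_sub hk.le]
              ring_nf
            refine ⟨1 - ((m : ℤ) + n - k) / n, ?_⟩
            rw [hcast, Int.emod_def]
            ring
          rw [this, sub_eq_add_neg, eF_add]
      _ = (∑ k ∈ Finset.range n, (a k : ℂ) * eF n s (-(k : ℤ))) *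
            (∑ m ∈ Finset.range n, (a m : ℂ) * eF n s m) := by
          rw [Finset.sum_mul]
          refine Finset.sum_congr rfl fun k _ => ?_
          rw [Finset.mul_sum]
          exact Finset.sum_congr rfl fun m _ => by ring
      _ = dft n a s * (starRingEnd ℂ) (dft n a s) := by
          rw [dft_eq, map_sum, mul_comm]
          congr 1
          refine Finset.sum_congr rfl fun k _ => ?_
          rw [map_mul, conj_eF]
          norm_num
  rw [key]
  rw [Complex.mul_conj]
  unfold psd
  rw [Complex.sq_norm]

theorem psd_test_three (n : ℕ) (a b c : ℕ → ℤ)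
    (hsa : SymmSeq n a) (hsb : SymmSeq n b) (hsc : SymmSeq n c)
    (hpa : PMOne n a) (hpb : PMOne n b) (hpc : PMOne n c)
    (s : ℤ) (hs : psd n a s + psd n b s + psd n c s > 4 * n) :
    ¬ ∃ d : ℕ → ℤ, IsWilliamson n a b c d := by
  rintro ⟨d, hw⟩
  obtain ⟨_, _, _, _, _, _, _, hpd, hpaf⟩ := hw
  rcases Nat.eq_zero_or_pos n with hn | hn
  · subst hn
    simp [psd, dft] at hs
  · have h4 : (psd n a s : ℂ) + psd n b s + psd n c s + psd n d s
        = ∑ t ∈ Finset.range n,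
            ((paf n a t + paf n b t + paf n c t + paf n d t : ℤ) : ℂ) * eF n s t := by
      rw [psd_eq_sum n hn a s, psd_eq_sum n hn b s, psd_eq_sum n hn c s, psd_eq_sum n hn d s,
        ← Finset.sum_add_distrib, ← Finset.sum_add_distrib, ← Finset.sum_add_distrib]
      refine Finset.sum_congr rfl fun t _ => ?_
      push_cast
      ring
    have hterm : ∀ t ∈ Finset.range n, t ≠ 0 →
        ((paf n a t + paf n b t + paf n c t + paf n d t : ℤ) : ℂ) * eF n s t = 0 := by
      intro t ht hne
      rw [Finset.mem_range] at ht
      have hz : paf n a t + paf n b t + paf n c t + paf n d t = 0 := by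
        rcases le_or_gt t (n / 2) with h | h
        · exact hpaf t (by omega) h
        · rw [paf_even n hn a t ht.le, paf_even n hn b t ht.le, paf_even n hn c t ht.le,
            paf_even n hn d t ht.le]
          exact hpaf (n - t) (by omega) (by omega)
      rw [hz]
      norm_num
    have hval : ∑ t ∈ Finset.range n,
        ((paf n a t + paf n b t + paf n c t + paf n d t : ℤ) : ℂ) * eF n s t
          = ((4 * n : ℝ) : ℂ) := by
      rw [Finset.sum_eq_single_of_mem 0 (Finset.mem_range.2 hn) hterm, Nat.cast_zero, eF_zero, mul_one,
        paf_zero n a hpa, paf_zero n b hpb, paf_zero n c hpc, paf_zero n d hpd]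
      push_cast
      ring
    have keyR : psd n a s + psd n b s + psd n c s + psd n d s = 4 * n := by
      have := h4.trans hval
      exact_mod_cast this
    have hd : 0 ≤ psd n d s := by unfold psd; positivity
    linarith
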